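/- Let a_1, …, a_n be positive integers with Σ_{1≤i≤n} a_i = 2B and a_i ≤ B for all i, and set k = (B+1)(B+2). Let G be the vertex-weighted graph with vertex set {r} ∪ {u_i, v_i : 1 ≤ i ≤ n} ∪ {w, x}, edge set {{r,u_i}, {u_i,v_i} : 1 ≤ i ≤ n} ∪ {{r,w}, {w,x}}, and weights w(r) = B+1, w(u_i) = a_i, w(v_i) = a_i·B for each i, w(w) = 1, and w(x) = (B+1)². Then wvi(G) ≤ k if and only if there exists I ⊆ {1,…,n} with Σ_{i∈I} a_i = B. -/

import Mathlib

namespace VI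

open SimpleGraph

variable {V : Type*}

/-- Total weight of a set of vertices. -/
noncomputable def setWeight (w : V → ℕ) (X : Set V) : ℕ := ∑ᶠ v ∈ X, w v

/-- Maximum weight of a connected component of `G − S`. -/
noncomputable def compMax (G : SimpleGraph V) (w : V → ℕ) (S : Set V) : ℕ :=
  sSup {n | ∃ C : (G.induce Sᶜ).ConnectedComponent, n = setWeight w (Subtype.val '' C.supp)}

/-- `w(S) + max_{C ∈ cc(G−S)} w(V(C))`. -/
noncomputable def viCost (G : SimpleGraph V) (w : V → ℕ) (S : Set V) : ℕ :=
  setWeight w S + compMax G w S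

/-- The weighted vertex integrity of `G`. -/
noncomputable def wvi (G : SimpleGraph V) (w : V → ℕ) : ℕ := ⨅ S : Set V, viCost G w S

/-- Maximum number of vertices of a connected component of `G − S`. -/
noncomputable def uCompMax (G : SimpleGraph V) (S : Set V) : ℕ :=
  sSup {n | ∃ C : (G.induce Sᶜ).ConnectedComponent, n = C.supp.ncard}

/-- `|S| + max_{C ∈ cc(G−S)} |V(C)|`. -/
noncomputable def uViCost (G : SimpleGraph V) (S : Set V) : ℕ := S.ncard + uCompMax G S

/-- The (unweighted) vertex integrity of `G`. -/
noncomputable def uvi (G : SimpleGraph V) : ℕ := ⨅ S : Set V, uViCost G S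

/-- A vertex `v` is redundant w.r.t. `S` if at most one connected component of `G − S`
contains a neighbor of `v`. -/
def Redundant (G : SimpleGraph V) (S : Set V) (v : V) : Prop :=
  {C : (G.induce Sᶜ).ConnectedComponent | ∃ u : (Sᶜ : Set V), G.Adj v ↑u ∧ u ∈ C.supp}.Subsingleton

/-- `S` is irredundant if it contains no redundant vertex. -/
def Irredundant (G : SimpleGraph V) (S : Set V) : Prop := ∀ v ∈ S, ¬ Redundant G S v

end VI

namespace VI

/-- Vertices `r`, `u_1, …, u_n`, `v_1, …, v_n`, `w`, `x` of the subdivided star. -/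
def PartVertex (n : ℕ) : Type :=
  Unit ⊕ Fin n ⊕ Fin n ⊕ Unit ⊕ Unit

/-- Edges `{r, u_i}`, `{u_i, v_i}`, `{r, w}` and `{w, x}`. -/
def partRel (n : ℕ) : PartVertex n → PartVertex n → Prop
  | .inl _, .inr (.inl _) => True
  | .inr (.inl i), .inr (.inr (.inl i')) => i = i'
  | .inl _, .inr (.inr (.inr (.inl _))) => True
  | .inr (.inr (.inr (.inl _))), .inr (.inr (.inr (.inr _))) => True
  | _, _ => False

/-- The subdivided star of the reduction from Partition. -/
def partGraph (n : ℕ) : SimpleGraph (PartVertex n) := SimpleGraph.fromRel (partRel n)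

/-- Weights `w(r) = B+1`, `w(u_i) = a_i`, `w(v_i) = a_i·B`, `w(w) = 1`, `w(x) = (B+1)²`. -/
def partWeight (n B : ℕ) (a : Fin n → ℕ) : PartVertex n → ℕ
  | .inl _ => B + 1
  | .inr (.inl i) => a i
  | .inr (.inr (.inl i)) => a i * B
  | .inr (.inr (.inr (.inl _))) => 1
  | .inr (.inr (.inr (.inr _))) => (B + 1) ^ 2

end VI


namespace VI

open SimpleGraph

section Infra

variable {V : Type*}

lemma setWeight_coe (w : V → ℕ) (F : Finset V) : setWeight w ↑F = ∑ v ∈ F, w v :=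
  finsum_mem_coe_finset w F

lemma setWeight_mono [Fintype V] (w : V → ℕ) {X Y : Set V} (h : X ⊆ Y) :
    setWeight w X ≤ setWeight w Y := by
  classical
  rw [setWeight, setWeight, finsum_mem_eq_finite_toFinset_sum _ X.toFinite,
    finsum_mem_eq_finite_toFinset_sum _ Y.toFinite]
  refine Finset.sum_le_sum_of_subset ?_
  intro v hv
  simp only [Set.Finite.mem_toFinset] at hv ⊢
  exact h hv

lemma finsetWeight_le_setWeight [Fintype V] (w : V → ℕ) (F : Finset V) (Y : Set V)
    (h : ↑F ⊆ Y) : ∑ v ∈ F, w v ≤ setWeight w Y := by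
  rw [← setWeight_coe]; exact setWeight_mono w h

lemma walk_closed (G : SimpleGraph V) (S T : Set V)
    (hcl : ∀ a b : V, a ∈ T → a ∉ S → b ∉ S → G.Adj a b → b ∈ T) :
    ∀ {p q : ↥(Sᶜ)} (_ : (G.induce Sᶜ).Walk p q), ↑p ∈ T → ↑q ∈ T := by
  intro p q wk
  induction wk with
  | nil => exact id
  | @cons p c q h _ ih =>
    intro hp
    exact ih (hcl ↑p ↑c hp p.2 c.2 (comap_adj.mp h))

lemma supp_subset_of_closed (G : SimpleGraph V) (S T : Set V) (y : V) (hy : y ∉ S)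
    (hyT : y ∈ T) (hcl : ∀ a b : V, a ∈ T → a ∉ S → b ∉ S → G.Adj a b → b ∈ T) :
    Subtype.val '' ((G.induce Sᶜ).connectedComponentMk ⟨y, hy⟩).supp ⊆ T := by
  rintro _ ⟨z, hz, rfl⟩
  rw [ConnectedComponent.mem_supp_iff, ConnectedComponent.eq] at hz
  obtain ⟨wk⟩ := hz.symm
  exact walk_closed G S T hcl wk hyT

lemma mem_comp_image (G : SimpleGraph V) (S : Set V) {y z : V} (hy : y ∉ S) (hz : z ∉ S)
    (h : (G.induce Sᶜ).Reachable (⟨z, hz⟩ : ↥(Sᶜ)) ⟨y, hy⟩) :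
    z ∈ Subtype.val '' ((G.induce Sᶜ).connectedComponentMk ⟨y, hy⟩).supp :=
  ⟨⟨z, hz⟩, by rw [ConnectedComponent.mem_supp_iff, ConnectedComponent.eq]; exact h, rfl⟩

lemma bddAbove_comp (G : SimpleGraph V) [Fintype V] (w : V → ℕ) (S : Set V) :
    BddAbove {m | ∃ C : (G.induce Sᶜ).ConnectedComponent,
      m = setWeight w (Subtype.val '' C.supp)} := by
  refine ⟨setWeight w Set.univ, ?_⟩
  rintro m ⟨C, rfl⟩
  exact setWeight_mono w (Set.subset_univ _)

lemma le_compMax (G : SimpleGraph V) [Fintype V] (w : V → ℕ) (S : Set V)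
    (C : (G.induce Sᶜ).ConnectedComponent) :
    setWeight w (Subtype.val '' C.supp) ≤ compMax G w S :=
  le_csSup (bddAbove_comp G w S) ⟨C, rfl⟩

lemma compMax_le (G : SimpleGraph V) [Fintype V] (w : V → ℕ) (S : Set V) (m : ℕ)
    (h : ∀ (y : V) (hy : y ∉ S),
      setWeight w (Subtype.val '' ((G.induce Sᶜ).connectedComponentMk ⟨y, hy⟩).supp) ≤ m) :
    compMax G w S ≤ m := by
  apply csSup_le'
  rintro _ ⟨C, rfl⟩
  obtain ⟨⟨y, hy⟩, rfl⟩ := C.exists_rep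
  exact h y hy

lemma wvi_le (G : SimpleGraph V) (w : V → ℕ) (S : Set V) : wvi G w ≤ viCost G w S :=
  ciInf_le (OrderBot.bddBelow _) S

lemma exists_wvi_set (G : SimpleGraph V) (w : V → ℕ) : ∃ S, viCost G w S = wvi G w := by
  have : wvi G w ∈ Set.range (viCost G w) := by
    rw [wvi, iInf]
    exact Nat.sInf_mem (Set.range_nonempty _)
  obtain ⟨S, hS⟩ := this
  exact ⟨S, hS⟩

end Infra

section Part

variable {n B : ℕ}

instance : Fintype (PartVertex n) :=
  inferInstanceAs (Fintype (Unit ⊕ Fin n ⊕ Fin n ⊕ Unit ⊕ Unit))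

instance : DecidableEq (PartVertex n) :=
  inferInstanceAs (DecidableEq (Unit ⊕ Fin n ⊕ Fin n ⊕ Unit ⊕ Unit))

def vr : PartVertex n := Sum.inl ()
def vu (i : Fin n) : PartVertex n := Sum.inr (Sum.inl i)
def vv (i : Fin n) : PartVertex n := Sum.inr (Sum.inr (Sum.inl i))
def vw : PartVertex n := Sum.inr (Sum.inr (Sum.inr (Sum.inl ())))
def vx : PartVertex n := Sum.inr (Sum.inr (Sum.inr (Sum.inr ())))

lemma vertex_cases (p : PartVertex n) :
    p = vr ∨ (∃ i, p = vu i) ∨ (∃ i, p = vv i) ∨ p = vw ∨ p = vx := by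
  obtain (⟨⟩ | i | i | ⟨⟩ | ⟨⟩) := p
  · exact Or.inl rfl
  · exact Or.inr (Or.inl ⟨i, rfl⟩)
  · exact Or.inr (Or.inr (Or.inl ⟨i, rfl⟩))
  · exact Or.inr (Or.inr (Or.inr (Or.inl rfl)))
  · exact Or.inr (Or.inr (Or.inr (Or.inr rfl)))

lemma adj_r_u (i : Fin n) : (partGraph n).Adj vr (vu i) := by
  rw [partGraph, fromRel_adj]
  exact ⟨by intro h; injection h, Or.inl trivial⟩

lemma adj_u_v (i : Fin n) : (partGraph n).Adj (vu i) (vv i) := by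
  rw [partGraph, fromRel_adj]
  exact ⟨by intro h; injection h with h; injection h, Or.inl rfl⟩

lemma adj_r_w : (partGraph n).Adj vr vw := by
  rw [partGraph, fromRel_adj]
  exact ⟨by intro h; injection h, Or.inl trivial⟩

lemma adj_w_x : (partGraph n).Adj vw vx := by
  rw [partGraph, fromRel_adj]
  refine ⟨?_, Or.inl trivial⟩
  intro h; injection h with h; injection h with h; injection h with h; injection h

lemma adj_from_vx {q : PartVertex n} (h : (partGraph n).Adj vx q) : q = vw := by
  rcases vertex_cases q with hq | ⟨j, hq⟩ | ⟨j, hq⟩ | hq | hq <;> subst hq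
  · exact absurd h.2 (by rintro (h | h) <;> exact h)
  · exact absurd h.2 (by rintro (h | h) <;> exact h)
  · exact absurd h.2 (by rintro (h | h) <;> exact h)
  · rfl
  · exact absurd rfl h.ne

lemma adj_from_vv {i : Fin n} {q : PartVertex n} (h : (partGraph n).Adj (vv i) q) :
    q = vu i := by
  rcases vertex_cases q with hq | ⟨j, hq⟩ | ⟨j, hq⟩ | hq | hq <;> subst hq
  · exact absurd h.2 (by rintro (h | h) <;> exact h)
  · obtain h | h := h.2
    · exact (show False from h).elim
    · rw [show j = i from h]
  · have hne := h.ne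
    obtain h | h := h.2
    · exact (show False from h).elim
    · exact (show False from h).elim
  · exact absurd h.2 (by rintro (h | h) <;> exact h)
  · exact absurd h.2 (by rintro (h | h) <;> exact h)

lemma adj_from_vu {i : Fin n} {q : PartVertex n} (h : (partGraph n).Adj (vu i) q) :
    q = vr ∨ q = vv i := by
  rcases vertex_cases q with hq | ⟨j, hq⟩ | ⟨j, hq⟩ | hq | hq <;> subst hq
  · exact Or.inl rfl
  · obtain h | h := h.2 <;> exact (show False from h).elim
  · obtain h | h := h.2
    · rw [show j = i from (show i = j from h).symm]; exact Or.inr rfl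
    · exact (show False from h).elim
  · exact absurd h.2 (by rintro (h | h) <;> exact h)
  · exact absurd h.2 (by rintro (h | h) <;> exact h)

lemma adj_from_vw {q : PartVertex n} (h : (partGraph n).Adj vw q) : q = vr ∨ q = vx := by
  rcases vertex_cases q with hq | ⟨j, hq⟩ | ⟨j, hq⟩ | hq | hq <;> subst hq
  · exact Or.inl rfl
  · exact absurd h.2 (by rintro (h | h) <;> exact h)
  · exact absurd h.2 (by rintro (h | h) <;> exact h)
  · exact absurd rfl h.ne
  · exact Or.inr rfl

lemma adj_from_vr {q : PartVertex n} (h : (partGraph n).Adj vr q) :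
    q = vw ∨ ∃ i, q = vu i := by
  rcases vertex_cases q with hq | ⟨j, hq⟩ | ⟨j, hq⟩ | hq | hq <;> subst hq
  · exact absurd rfl h.ne
  · exact Or.inr ⟨j, rfl⟩
  · exact absurd h.2 (by rintro (h | h) <;> exact h)
  · exact Or.inl rfl
  · exact absurd h.2 (by rintro (h | h) <;> exact h)

end Part


section Part2

open SimpleGraph

variable {n B : ℕ}

@[simp] lemma vu_eq_vu {i j : Fin n} : vu i = vu j ↔ i = j := by
  constructor
  · intro h; injection h with h; injection h with h
  · intro h; rw [h]

@[simp] lemma vv_eq_vv {i j : Fin n} : vv i = vv j ↔ i = j := by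
  constructor
  · intro h; injection h with h; injection h with h; injection h with h
  · intro h; rw [h]

@[simp] lemma vr_ne_vu (i : Fin n) : vr ≠ vu i := by intro h; injection h
@[simp] lemma vr_ne_vv (i : Fin n) : vr ≠ vv i := by intro h; injection h
@[simp] lemma vr_ne_vw : (vr : PartVertex n) ≠ vw := by intro h; injection h
@[simp] lemma vr_ne_vx : (vr : PartVertex n) ≠ vx := by intro h; injection h
@[simp] lemma vu_ne_vv (i j : Fin n) : vu i ≠ vv j := by
  intro h; injection h with h; injection h
@[simp] lemma vu_ne_vw (i : Fin n) : vu i ≠ vw := by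
  intro h; injection h with h; injection h
@[simp] lemma vu_ne_vx (i : Fin n) : vu i ≠ vx := by
  intro h; injection h with h; injection h
@[simp] lemma vv_ne_vw (i : Fin n) : vv i ≠ vw := by
  intro h; injection h with h; injection h with h; injection h
@[simp] lemma vv_ne_vx (i : Fin n) : vv i ≠ vx := by
  intro h; injection h with h; injection h with h; injection h
@[simp] lemma vw_ne_vx : (vw : PartVertex n) ≠ vx := by
  intro h; injection h with h; injection h with h; injection h with h; injection h

@[simp] lemma vu_ne_vr (i : Fin n) : vu i ≠ vr := (vr_ne_vu i).symm
@[simp] lemma vv_ne_vr (i : Fin n) : vv i ≠ vr := (vr_ne_vv i).symm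
@[simp] lemma vw_ne_vr : (vw : PartVertex n) ≠ vr := vr_ne_vw.symm
@[simp] lemma vx_ne_vr : (vx : PartVertex n) ≠ vr := vr_ne_vx.symm
@[simp] lemma vv_ne_vu (i j : Fin n) : vv i ≠ vu j := (vu_ne_vv j i).symm
@[simp] lemma vw_ne_vu (i : Fin n) : vw ≠ vu i := (vu_ne_vw i).symm
@[simp] lemma vx_ne_vu (i : Fin n) : vx ≠ vu i := (vu_ne_vx i).symm
@[simp] lemma vw_ne_vv (i : Fin n) : vw ≠ vv i := (vv_ne_vw i).symm
@[simp] lemma vx_ne_vv (i : Fin n) : vx ≠ vv i := (vv_ne_vx i).symm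
@[simp] lemma vx_ne_vw : (vx : PartVertex n) ≠ vw := vw_ne_vx.symm

lemma vu_inj : Function.Injective (vu (n := n)) := fun _ _ h => vu_eq_vu.mp h
lemma vv_inj : Function.Injective (vv (n := n)) := fun _ _ h => vv_eq_vv.mp h

variable {a : Fin n → ℕ}

@[simp] lemma W_vr : partWeight n B a vr = B + 1 := rfl
@[simp] lemma W_vu (i : Fin n) : partWeight n B a (vu i) = a i := rfl
@[simp] lemma W_vv (i : Fin n) : partWeight n B a (vv i) = a i * B := rfl
@[simp] lemma W_vw : partWeight n B a vw = 1 := rfl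
@[simp] lemma W_vx : partWeight n B a vx = (B + 1) ^ 2 := rfl

end Part2

section Helpers

open SimpleGraph

variable {V : Type*} [Fintype V]

omit [Fintype V] in
lemma induce_adj' {G : SimpleGraph V} {S : Set V} {p q : V} (hp : p ∉ S) (hq : q ∉ S)
    (h : G.Adj p q) : (G.induce Sᶜ).Adj ⟨p, hp⟩ ⟨q, hq⟩ :=
  comap_adj.mpr h

/-- Lower bound on `compMax` from a finset of vertices reachable from `y` in `G - S`. -/
lemma key_lb (G : SimpleGraph V) (w : V → ℕ) (S : Set V) (F₀ : Finset V) (y : V) (hy : y ∉ S)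
    (h : ∀ p ∈ F₀, ∃ hp : p ∉ S, (G.induce Sᶜ).Reachable ⟨p, hp⟩ ⟨y, hy⟩) :
    ∑ p ∈ F₀, w p ≤ compMax G w S := by
  refine le_trans (finsetWeight_le_setWeight w F₀
    (Subtype.val '' ((G.induce Sᶜ).connectedComponentMk ⟨y, hy⟩).supp) ?_)
    (le_compMax G w S ((G.induce Sᶜ).connectedComponentMk ⟨y, hy⟩))
  intro p hp
  obtain ⟨hpS, hre⟩ := h p hp
  exact mem_comp_image G S hy hpS hre

/-- Upper bound on the weight of the component of `y` from a closed finset. -/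
lemma comp_ub (G : SimpleGraph V) (w : V → ℕ) (S : Set V) (m : ℕ) (T : Finset V) (y : V)
    (hy : y ∉ S) (hyT : y ∈ T)
    (hcl : ∀ p ∈ T, p ∉ S → ∀ q, q ∉ S → G.Adj p q → q ∈ T)
    (hm : ∑ p ∈ T, w p ≤ m) :
    setWeight w (Subtype.val '' ((G.induce Sᶜ).connectedComponentMk ⟨y, hy⟩).supp) ≤ m := by
  refine le_trans (setWeight_mono w (supp_subset_of_closed G S ↑T y hy hyT ?_)) ?_
  · intro p q hpT hpS hqS hadj
    exact hcl p hpT hpS q hqS hadj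
  · rw [setWeight_coe]; exact hm

lemma wS_lb (w : V → ℕ) (S : Set V) (F₀ : Finset V) (h : ∀ p ∈ F₀, p ∈ S) :
    ∑ p ∈ F₀, w p ≤ setWeight w S :=
  finsetWeight_le_setWeight w F₀ S h

end Helpers

end VI

open VI SimpleGraph in
/-- `wvi(G) ≤ (B+1)(B+2)` iff the Partition instance `a_1, …, a_n` has a solution. -/
theorem statement11 (n B k : ℕ) (a : Fin n → ℕ) (ha : ∀ i, 0 < a i)
    (hsum : ∑ i, a i = 2 * B) (hle : ∀ i, a i ≤ B) (hk : k = (B + 1) * (B + 2)) :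
    wvi (partGraph n) (partWeight n B a) ≤ k ↔
      ∃ I : Finset (Fin n), ∑ i ∈ I, a i = B := by
  classical
  have hkQ : k = (B + 1) ^ 2 + (B + 1) := by rw [hk]; ring
  have hQexp : (B + 1) ^ 2 = B * B + 2 * B + 1 := by ring
  constructor
  · -- Forward direction
    intro hwvi
    by_cases hB0 : B = 0
    · exact ⟨∅, by simp [hB0]⟩
    have hB1 : 1 ≤ B := Nat.one_le_iff_ne_zero.mpr hB0
    set W := partWeight n B a with hWdef
    have Wr : W vr = B + 1 := rfl
    have Wu : ∀ i, W (vu i) = a i := fun _ => rfl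
    have Wv : ∀ i, W (vv i) = a i * B := fun _ => rfl
    have Ww : W vw = 1 := rfl
    have Wx : W vx = (B + 1) ^ 2 := rfl
    obtain ⟨S, hS⟩ := exists_wvi_set (partGraph n) W
    have hcost : setWeight W S + compMax (partGraph n) W S ≤ (B + 1) ^ 2 + (B + 1) := by
      have h0 : viCost (partGraph n) W S ≤ k := hS.le.trans hwvi
      rw [viCost, hkQ] at h0
      exact h0
    -- Step 1 : vx ∉ S
    have hx : vx ∉ S := by
      intro hx
      by_cases hr : vr ∈ S
      · by_cases hw : vw ∈ S
        · have h1 := wS_lb W S {vx, vr, vw}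
            (by intro p hp; fin_cases hp <;> assumption)
          simp [Wr, Wu, Wv, Ww, Wx] at h1
          linarith
        · have h1 := wS_lb W S {vx, vr}
            (by intro p hp; fin_cases hp <;> assumption)
          simp [Wr, Wu, Wv, Ww, Wx] at h1
          have h2 := key_lb (partGraph n) W S {vw} vw hw
            (by intro p hp
                rw [Finset.mem_singleton] at hp; subst hp
                exact ⟨hw, Reachable.refl _⟩)
          simp [Wr, Wu, Wv, Ww, Wx] at h2
          linarith
      · have hall : ∀ i, vu i ∈ S := by
          intro i; by_contra hui
          have h1 := wS_lb W S {vx} (by intro p hp; fin_cases hp <;> assumption)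
          simp [Wr, Wu, Wv, Ww, Wx] at h1
          have h2 := key_lb (partGraph n) W S {vr, vu i} vr hr
            (by intro p hp
                simp only [Finset.mem_insert, Finset.mem_singleton] at hp
                rcases hp with rfl | rfl
                · exact ⟨hr, Reachable.refl _⟩
                · exact ⟨hui, (induce_adj' hui hr (adj_r_u i).symm).reachable⟩)
          rw [Finset.sum_insert (by simp), Finset.sum_singleton] at h2
          simp [Wr, Wu, Wv, Ww, Wx] at h2
          have := ha i
          linarith
        have h1 := wS_lb W S (insert vx (Finset.univ.image vu))
          (by intro p hp
              simp only [Finset.mem_insert, Finset.mem_image] at hp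
              rcases hp with rfl | ⟨i, -, rfl⟩
              · exact hx
              · exact hall i)
        rw [Finset.sum_insert (by simp),
          Finset.sum_image (fun p _ q _ h => vu_inj h)] at h1
        simp only [Wx, Wu] at h1
        rw [hsum] at h1
        have h2 := key_lb (partGraph n) W S {vr} vr hr
          (by intro p hp
              rw [Finset.mem_singleton] at hp; subst hp
              exact ⟨hr, Reachable.refl _⟩)
        simp [Wr, Wu, Wv, Ww, Wx] at h2
        linarith
    -- Step 2 : vr ∉ S
    have hr : vr ∉ S := by
      intro hr
      have h3 := key_lb (partGraph n) W S {vx} vx hx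
        (by intro p hp
            rw [Finset.mem_singleton] at hp; subst hp
            exact ⟨hx, Reachable.refl _⟩)
      simp [Wr, Wu, Wv, Ww, Wx] at h3
      by_cases hw : vw ∈ S
      · have h1 := wS_lb W S {vr, vw} (by intro p hp; fin_cases hp <;> assumption)
        simp [Wr, Wu, Wv, Ww, Wx] at h1
        linarith
      · have h1 := wS_lb W S {vr} (by intro p hp; fin_cases hp <;> assumption)
        simp [Wr, Wu, Wv, Ww, Wx] at h1
        have h2 := key_lb (partGraph n) W S {vx, vw} vx hx
          (by intro p hp
              simp only [Finset.mem_insert, Finset.mem_singleton] at hp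
              rcases hp with rfl | rfl
              · exact ⟨hx, Reachable.refl _⟩
              · exact ⟨hw, (induce_adj' hw hx adj_w_x).reachable⟩)
        rw [Finset.sum_insert (by simp), Finset.sum_singleton] at h2
        simp [Wr, Wu, Wv, Ww, Wx] at h2
        linarith
    -- Step 3 : vw ∈ S
    have hw : vw ∈ S := by
      by_contra hw
      have h2 := key_lb (partGraph n) W S {vx, vw, vr} vx hx
        (by intro p hp
            simp only [Finset.mem_insert, Finset.mem_singleton] at hp
            rcases hp with rfl | rfl | rfl
            · exact ⟨hx, Reachable.refl _⟩
            · exact ⟨hw, (induce_adj' hw hx adj_w_x).reachable⟩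
            · exact ⟨hr, ((induce_adj' hr hw adj_r_w).reachable).trans
                (induce_adj' hw hx adj_w_x).reachable⟩)
      rw [Finset.sum_insert (by simp), Finset.sum_insert (by simp),
        Finset.sum_singleton] at h2
      simp [Wr, Wu, Wv, Ww, Wx] at h2
      linarith
    -- Main part
    set I : Finset (Fin n) := Finset.univ.filter (fun i => vu i ∈ S) with hIdef
    set J : Finset (Fin n) := Finset.univ.filter (fun i => vu i ∉ S ∧ vv i ∈ S) with hJdef
    set K : Finset (Fin n) := Finset.univ.filter (fun i => vu i ∉ S ∧ vv i ∉ S) with hKdef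
    have hImem : ∀ i, i ∈ I ↔ vu i ∈ S := by intro i; simp [hIdef]
    have hJmem : ∀ i, i ∈ J ↔ vu i ∉ S ∧ vv i ∈ S := by intro i; simp [hJdef]
    have hKmem : ∀ i, i ∈ K ↔ vu i ∉ S ∧ vv i ∉ S := by intro i; simp [hKdef]
    have hpart : ∑ i ∈ I, a i + (∑ i ∈ J, a i + ∑ i ∈ K, a i) = 2 * B := by
      have e1 := Finset.sum_filter_add_sum_filter_not Finset.univ (fun i => vu i ∈ S) a
      have e2 := Finset.sum_filter_add_sum_filter_not
        (Finset.univ.filter (fun i => ¬ vu i ∈ S)) (fun i => vv i ∈ S) a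
      have eJ : (Finset.univ.filter (fun i => ¬ vu i ∈ S)).filter (fun i => vv i ∈ S) = J := by
        ext i; simp [hJdef, Finset.mem_filter]
      have eK : (Finset.univ.filter (fun i => ¬ vu i ∈ S)).filter (fun i => ¬ vv i ∈ S) = K := by
        ext i; simp [hKdef, Finset.mem_filter]
      rw [eJ, eK] at e2
      rw [hsum] at e1
      rw [← e2] at e1
      rw [hIdef]
      exact e1
    have hdisjJK : Disjoint J K := by
      rw [Finset.disjoint_left]
      intro i hiJ hiK
      exact (((hKmem i).mp hiK).2) (((hJmem i).mp hiJ).2)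
    -- lower bound on w(S)
    have h1 : 1 + ∑ i ∈ I, a i + (∑ i ∈ J, a i) * B ≤ setWeight W S := by
      have h1' := wS_lb W S (insert vw (I.image vu ∪ J.image vv))
        (by intro p hp
            simp only [Finset.mem_insert, Finset.mem_union, Finset.mem_image] at hp
            rcases hp with rfl | ⟨i, hi, rfl⟩ | ⟨i, hi, rfl⟩
            · exact hw
            · exact (hImem i).mp hi
            · exact ((hJmem i).mp hi).2)
      rw [Finset.sum_insert (by simp), Finset.sum_union
          (by rw [Finset.disjoint_left]
              intro p hp hq
              simp only [Finset.mem_image] at hp hq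
              obtain ⟨i, -, rfl⟩ := hp
              obtain ⟨j, -, hj⟩ := hq
              exact vv_ne_vu j i hj),
        Finset.sum_image (fun p _ q _ h => vu_inj h),
        Finset.sum_image (fun p _ q _ h => vv_inj h)] at h1'
      simp only [Ww, Wu, Wv] at h1'
      rw [← Finset.sum_mul] at h1'
      linarith
    -- lower bound on compMax from the component of r
    have h2 : (B + 1) + (∑ i ∈ J, a i + ∑ i ∈ K, a i) + (∑ i ∈ K, a i) * B ≤
        compMax (partGraph n) W S := by
      have h2' := key_lb (partGraph n) W S
        (insert vr ((J ∪ K).image vu ∪ K.image vv)) vr hr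
        (by intro p hp
            simp only [Finset.mem_insert, Finset.mem_union, Finset.mem_image] at hp
            rcases hp with rfl | ⟨i, hi, rfl⟩ | ⟨i, hi, rfl⟩
            · exact ⟨hr, Reachable.refl _⟩
            · have hui : vu i ∉ S := by
                rcases hi with hi | hi
                · exact ((hJmem i).mp hi).1
                · exact ((hKmem i).mp hi).1
              exact ⟨hui, (induce_adj' hui hr (adj_r_u i).symm).reachable⟩
            · have hui : vu i ∉ S := ((hKmem i).mp hi).1
              have hvi : vv i ∉ S := ((hKmem i).mp hi).2
              exact ⟨hvi, ((induce_adj' hvi hui (adj_u_v i).symm).reachable).trans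
                (induce_adj' hui hr (adj_r_u i).symm).reachable⟩)
      rw [Finset.sum_insert (by simp), Finset.sum_union
          (by rw [Finset.disjoint_left]
              intro p hp hq
              simp only [Finset.mem_image] at hp hq
              obtain ⟨i, -, rfl⟩ := hp
              obtain ⟨j, -, hj⟩ := hq
              exact vv_ne_vu j i hj),
        Finset.sum_image (fun p _ q _ h => vu_inj h),
        Finset.sum_image (fun p _ q _ h => vv_inj h),
        Finset.sum_union hdisjJK] at h2'
      simp only [Wr, Wu, Wv] at h2'
      rw [← Finset.sum_mul] at h2'
      linarith
    -- lower bound on compMax from the component of x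
    have h3 : (B + 1) ^ 2 ≤ compMax (partGraph n) W S := by
      have h3' := key_lb (partGraph n) W S {vx} vx hx
        (by intro p hp
            rw [Finset.mem_singleton] at hp; subst hp
            exact ⟨hx, Reachable.refl _⟩)
      simpa [Wx] using h3'
    -- arithmetic
    have h5 : setWeight W S ≤ B + 1 := by
      have h4 : setWeight W S + (B + 1) ^ 2 ≤ (B + 1) ^ 2 + (B + 1) :=
        le_trans (Nat.add_le_add_left h3 _) hcost
      exact Nat.le_of_add_le_add_right (h4.trans_eq (add_comm _ _))
    have hsB : ∑ i ∈ I, a i ≤ B := by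
      have h6 : 1 + ∑ i ∈ I, a i ≤ B + 1 :=
        le_trans (Nat.le_add_right _ _) (h1.trans h5)
      omega
    have hA : (1 + ∑ i ∈ I, a i + (∑ i ∈ J, a i) * B) +
        ((B + 1) + (∑ i ∈ J, a i + ∑ i ∈ K, a i) + (∑ i ∈ K, a i) * B) ≤
        (B + 1) ^ 2 + (B + 1) := le_trans (Nat.add_le_add h1 h2) hcost
    rw [hQexp] at hA
    have hmul2 : (∑ i ∈ J, a i) * B + (∑ i ∈ K, a i) * B ≤ B * B := by linarith
    have hmul : (∑ i ∈ J, a i + ∑ i ∈ K, a i) * B ≤ B * B := by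
      rw [add_mul]; exact hmul2
    have hjkB : ∑ i ∈ J, a i + ∑ i ∈ K, a i ≤ B :=
      Nat.le_of_mul_le_mul_right hmul hB1
    refine ⟨I, ?_⟩
    omega
  · -- Backward direction
    rintro ⟨I, hI⟩
    have hsum2 : ∑ i ∈ Finset.univ \ I, a i = B := by
      have h := Finset.sum_sdiff (Finset.subset_univ I) (f := a)
      omega
    set W := partWeight n B a with hWdef
    have Wr : W vr = B + 1 := rfl
    have Wu : ∀ i, W (vu i) = a i := fun _ => rfl
    have Wv : ∀ i, W (vv i) = a i * B := fun _ => rfl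
    have Ww : W vw = 1 := rfl
    have Wx : W vx = (B + 1) ^ 2 := rfl
    set S : Set (PartVertex n) := ↑(insert vw (I.image vu) : Finset (PartVertex n)) with hSdef
    have hmemS : ∀ p : PartVertex n, p ∈ S ↔ p = vw ∨ ∃ i ∈ I, p = vu i := by
      intro p
      simp only [hSdef, Finset.coe_insert, Set.mem_insert_iff, Finset.coe_image,
        Set.mem_image, Finset.mem_coe]
      constructor
      · rintro (rfl | ⟨i, hi, rfl⟩)
        · exact Or.inl rfl
        · exact Or.inr ⟨i, hi, rfl⟩
      · rintro (rfl | ⟨i, hi, rfl⟩)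
        · exact Or.inl rfl
        · exact Or.inr ⟨i, hi, rfl⟩
    have hvwS : vw ∈ S := (hmemS vw).mpr (Or.inl rfl)
    have hvuS : ∀ i, vu i ∈ S ↔ i ∈ I := by
      intro i
      rw [hmemS]
      simp
    have hvvS : ∀ i, vv i ∉ S := by
      intro i h
      rcases (hmemS (vv i)).mp h with h' | ⟨j, -, h'⟩
      · exact vv_ne_vw i h'
      · exact vv_ne_vu i j h'
    have hvrS : vr ∉ S := by
      intro h
      rcases (hmemS vr).mp h with h' | ⟨j, -, h'⟩
      · exact vr_ne_vw h'
      · exact vr_ne_vu j h'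
    have hvxS : vx ∉ S := by
      intro h
      rcases (hmemS vx).mp h with h' | ⟨j, -, h'⟩
      · exact vx_ne_vw h'
      · exact vx_ne_vu j h'
    refine le_trans (wvi_le (partGraph n) W S) ?_
    rw [viCost]
    have hWS : setWeight W S = 1 + B := by
      rw [hSdef, setWeight_coe, Finset.sum_insert (by simp),
        Finset.sum_image (fun p _ q _ h => vu_inj h)]
      simp only [Ww, Wu]
      rw [hI]
    set T3 : Finset (PartVertex n) :=
      insert vr ((Finset.univ \ I).image vu ∪ (Finset.univ \ I).image vv) with hT3def
    have hmemT3 : ∀ p, p ∈ T3 ↔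
        p = vr ∨ (∃ i, i ∉ I ∧ p = vu i) ∨ (∃ i, i ∉ I ∧ p = vv i) := by
      intro p
      simp only [hT3def, Finset.mem_insert, Finset.mem_union, Finset.mem_image,
        Finset.mem_sdiff, Finset.mem_univ, true_and]
      constructor
      · rintro (rfl | ⟨i, hi, rfl⟩ | ⟨i, hi, rfl⟩)
        · exact Or.inl rfl
        · exact Or.inr (Or.inl ⟨i, hi, rfl⟩)
        · exact Or.inr (Or.inr ⟨i, hi, rfl⟩)
      · rintro (rfl | ⟨i, hi, rfl⟩ | ⟨i, hi, rfl⟩)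
        · exact Or.inl rfl
        · exact Or.inr (Or.inl ⟨i, hi, rfl⟩)
        · exact Or.inr (Or.inr ⟨i, hi, rfl⟩)
    have hT3sum : ∑ p ∈ T3, W p = (B + 1) ^ 2 := by
      rw [hT3def, Finset.sum_insert (by simp), Finset.sum_union
          (by rw [Finset.disjoint_left]
              intro p hp hq
              simp only [Finset.mem_image] at hp hq
              obtain ⟨i, -, rfl⟩ := hp
              obtain ⟨j, -, hj⟩ := hq
              exact vv_ne_vu j i hj),
        Finset.sum_image (fun p _ q _ h => vu_inj h),
        Finset.sum_image (fun p _ q _ h => vv_inj h)]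
      simp only [Wr, Wu, Wv]
      rw [← Finset.sum_mul, hsum2]
      ring
    have hT3closed : ∀ p ∈ T3, p ∉ S → ∀ q, q ∉ S → (partGraph n).Adj p q → q ∈ T3 := by
      intro p hp hpS q hqS hadj
      rw [hmemT3] at hp
      rcases hp with rfl | ⟨i, hiI, rfl⟩ | ⟨i, hiI, rfl⟩
      · rcases adj_from_vr hadj with rfl | ⟨i, rfl⟩
        · exact absurd hvwS hqS
        · exact (hmemT3 _).mpr (Or.inr (Or.inl ⟨i, fun h => hqS ((hvuS i).mpr h), rfl⟩))
      · rcases adj_from_vu hadj with rfl | rfl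
        · exact (hmemT3 _).mpr (Or.inl rfl)
        · exact (hmemT3 _).mpr (Or.inr (Or.inr ⟨i, hiI, rfl⟩))
      · rw [adj_from_vv hadj]
        exact (hmemT3 _).mpr (Or.inr (Or.inl ⟨i, hiI, rfl⟩))
    have hcomp : compMax (partGraph n) W S ≤ (B + 1) ^ 2 := by
      apply compMax_le
      intro y hy
      rcases vertex_cases y with rfl | ⟨i, rfl⟩ | ⟨i, rfl⟩ | rfl | rfl
      · exact comp_ub _ _ _ _ T3 vr hy ((hmemT3 _).mpr (Or.inl rfl)) hT3closed hT3sum.le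
      · refine comp_ub _ _ _ _ T3 (vu i) hy ?_ hT3closed hT3sum.le
        exact (hmemT3 _).mpr (Or.inr (Or.inl ⟨i, fun h => hy ((hvuS i).mpr h), rfl⟩))
      · by_cases hiI : i ∈ I
        · refine comp_ub _ _ _ _ {vv i} (vv i) hy (Finset.mem_singleton_self _) ?_ ?_
          · intro p hp hpS q hqS hadj
            rw [Finset.mem_singleton] at hp; subst hp
            rw [adj_from_vv hadj] at hqS
            exact absurd ((hvuS i).mpr hiI) hqS
          · rw [Finset.sum_singleton, Wv]
            calc a i * B ≤ B * B := Nat.mul_le_mul_right B (hle i)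
              _ ≤ (B + 1) ^ 2 := by nlinarith
        · refine comp_ub _ _ _ _ T3 (vv i) hy ?_ hT3closed hT3sum.le
          exact (hmemT3 _).mpr (Or.inr (Or.inr ⟨i, hiI, rfl⟩))
      · exact absurd hvwS hy
      · refine comp_ub _ _ _ _ {vx} vx hy (Finset.mem_singleton_self _) ?_ ?_
        · intro p hp hpS q hqS hadj
          rw [Finset.mem_singleton] at hp; subst hp
          rw [adj_from_vx hadj] at hqS
          exact absurd hvwS hqS
        · rw [Finset.sum_singleton, Wx]
    rw [hWS, hkQ]
    linarith
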